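/- For matrices A^{(n)} ∈ ℝ^{J_n×R}, n = 1,…,N, each with k-rank k_{A^{(n)}} ≥ 1, if Σ_{n=1}^N k_{A^{(n)}} ≥ R + N − 1, then the iterated Khatri-Rao product A^{(1)} ⊙ A^{(2)} ⊙ ⋯ ⊙ A^{(N)} has full column rank R. -/

import Mathlib

set_option maxHeartbeats 800000


open scoped BigOperators

/-- The k-rank (Kruskal rank) of a matrix: the largest `k ≤ R` such that every
set of `k` columns is linearly independent. -/
noncomputable def kRank {J R : ℕ} (A : Matrix (Fin J) (Fin R) ℝ) : ℕ :=
  sSup {k | k ≤ R ∧ ∀ s : Finset (Fin R), s.card = k →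
    LinearIndependent ℝ (fun r : s => A.transpose r.val)}

/-- The Khatri-Rao (column-wise Kronecker) product. -/
def khatriRao {J I R : ℕ} (A : Matrix (Fin J) (Fin R) ℝ)
    (B : Matrix (Fin I) (Fin R) ℝ) : Matrix (Fin J × Fin I) (Fin R) ℝ :=
  fun p r => A p.1 r * B p.2 r

/-- The iterated Khatri-Rao product of `N` matrices: the `r`-th column is
`a^{(1)}_r ⊗ ⋯ ⊗ a^{(N)}_r`. -/
def iterKhatriRao {N R : ℕ} {J : Fin N → ℕ}
    (A : ∀ n, Matrix (Fin (J n)) (Fin R) ℝ) :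
    Matrix (∀ n, Fin (J n)) (Fin R) ℝ :=
  fun j r => ∏ n, A n (j n) r

lemma kRank_mem {J R : ℕ} (A : Matrix (Fin J) (Fin R) ℝ) :
    kRank A ∈ {k | k ≤ R ∧ ∀ s : Finset (Fin R), s.card = k →
      LinearIndependent ℝ (fun r : s => A.transpose r.val)} := by
  unfold kRank
  apply Nat.sSup_mem
  · refine ⟨0, Nat.zero_le R, fun s hs => ?_⟩
    rw [Finset.card_eq_zero] at hs
    subst hs
    haveI : IsEmpty ((∅ : Finset (Fin R)) : Type) := by
      simp [Finset.isEmpty_coe_sort]; exact ⟨fun x => x.2⟩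
    exact linearIndependent_empty_type
  · exact ⟨R, fun k hk => hk.1⟩

lemma kRank_le {J R : ℕ} (A : Matrix (Fin J) (Fin R) ℝ) : kRank A ≤ R :=
  (kRank_mem A).1

lemma kRank_indep {J R : ℕ} (A : Matrix (Fin J) (Fin R) ℝ) {s : Finset (Fin R)}
    (h : s.card ≤ kRank A) :
    LinearIndependent ℝ (fun r : s => A.transpose r.val) := by
  obtain ⟨hle, hall⟩ := kRank_mem A
  obtain ⟨u, hsu, _, huc⟩ := Finset.exists_subsuperset_card_eq (s.subset_univ) h
    (by simpa using hle)
  have hind := hall u huc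
  exact hind.comp (fun r : s => (⟨r.val, hsu r.2⟩ : u))
    (fun a b hab => by
      simp only [Subtype.mk.injEq] at hab
      exact Subtype.ext hab)

lemma sum_min_ge {ι : Type*} [DecidableEq ι] (t : Finset ι) (k : ι → ℕ) (s : ℕ)
    (hk : ∀ n ∈ t, 1 ≤ k n) (hs : 1 ≤ s) :
    min ((∑ n ∈ t, k n) + 1) (s + t.card) ≤ (∑ n ∈ t, min (k n) s) + 1 := by
  induction t using Finset.induction_on with
  | empty => simp only [Finset.sum_empty, Finset.card_empty]; omega
  | insert _ _ ha ih =>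
    rename_i a t'
    rw [Finset.sum_insert ha, Finset.sum_insert ha, Finset.card_insert_of_notMem ha]
    have h1 : 1 ≤ k a := hk a (Finset.mem_insert_self _ _)
    have h2 := ih (fun n hn => hk n (Finset.mem_insert_of_mem hn))
    have h3 : ∑ n ∈ t', min (k n) s ≤ ∑ n ∈ t', k n :=
      Finset.sum_le_sum fun n _ => min_le_left _ _
    have h4 : t'.card ≤ ∑ n ∈ t', k n := by
      calc t'.card = ∑ _n ∈ t', 1 := by simp
      _ ≤ _ := Finset.sum_le_sum (fun n hn => hk n (Finset.mem_insert_of_mem hn))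
    omega

lemma key_lemma (N : ℕ) : ∀ (R : ℕ) (J : Fin N → ℕ)
    (A : ∀ n, Matrix (Fin (J n)) (Fin R) ℝ) (c : Fin R → ℝ),
    (∀ j : ∀ n, Fin (J n), ∑ r, c r * iterKhatriRao A j r = 0) →
    (∀ n, 1 ≤ kRank (A n)) →
    ((Finset.univ.filter fun r => c r ≠ 0).card + N ≤
      (∑ n, min (kRank (A n)) ((Finset.univ.filter fun r => c r ≠ 0).card)) + 1) →
    c = 0 := by
  induction N with
  | zero =>
    intro R J A c hker _ hcond
    classical
    have hsum : ∑ r, c r = 0 := by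
      have h := hker (fun n => n.elim0)
      simpa [iterKhatriRao] using h
    simp only [Finset.univ_eq_empty, Finset.sum_empty, Nat.add_zero, Nat.zero_add] at hcond
    have hcard : (Finset.univ.filter fun r => c r ≠ 0).card ≤ 1 := by omega
    funext r
    show c r = 0
    by_contra hr
    have hrS : r ∈ Finset.univ.filter fun r => c r ≠ 0 := by simp [hr]
    have : ∑ r', c r' = c r := by
      apply Finset.sum_eq_single r
      · intro b _ hb
        by_contra hcb
        have hbS : b ∈ Finset.univ.filter fun r => c r ≠ 0 := by simp [hcb]
        exact hb (Finset.card_le_one.mp hcard b hbS r hrS)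
      · intro hx; exact absurd (Finset.mem_univ r) hx
    rw [hsum] at this
    exact hr this.symm
  | succ N ih =>
    intro R J A c hker hk1 hcond
    by_contra hc
    obtain ⟨r0, hr0⟩ : ∃ r, c r ≠ 0 := by
      by_contra hall; push_neg at hall; exact hc (funext hall)
    obtain ⟨S, hS⟩ : ∃ S : Finset (Fin R), S = Finset.univ.filter (fun r => c r ≠ 0) :=
      ⟨_, rfl⟩
    rw [← hS] at hcond
    have hr0S : r0 ∈ S := by rw [hS]; simp [hr0]
    have hs1 : 1 ≤ S.card := Finset.card_pos.mpr ⟨r0, hr0S⟩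
    have hp_le : min (kRank (A 0)) S.card ≤ S.card := min_le_right _ _
    obtain ⟨T, hTS, hTcard⟩ := Finset.exists_subset_card_eq hp_le
    have hT1 : 1 ≤ T.card := by
      rw [hTcard]; exact le_min (hk1 0) hs1
    obtain ⟨t, htT⟩ := Finset.card_pos.mp hT1
    have htS : t ∈ S := hTS htT
    have hct : c t ≠ 0 := by
      rw [hS] at htS; simpa using htS
    have hind : LinearIndependent ℝ (fun r : T => (A 0).transpose r.val) :=
      kRank_indep _ (by rw [hTcard]; exact min_le_left _ _)
    have hnotmem : (A 0).transpose t ∉ Submodule.span ℝ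
        ((fun r : Fin R => (A 0).transpose r) '' ↑(T.erase t)) := by
      have himg : ((fun r : T => (A 0).transpose r.val) '' {x : T | x.val ∈ T.erase t})
          = (fun r : Fin R => (A 0).transpose r) '' ↑(T.erase t) := by
        ext y
        constructor
        · rintro ⟨x, hx, rfl⟩; exact ⟨x.val, hx, rfl⟩
        · rintro ⟨r, hr, rfl⟩
          exact ⟨⟨r, Finset.mem_of_mem_erase hr⟩, hr, rfl⟩
      rw [← himg]
      exact hind.notMem_span_image (x := ⟨t, htT⟩) (by simp)
    obtain ⟨W, hW⟩ : ∃ W : Submodule ℝ (Fin (J 0) → ℝ),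
        W = Submodule.span ℝ ((fun r : Fin R => (A 0).transpose r) '' ↑(T.erase t)) :=
      ⟨_, rfl⟩
    rw [← hW] at hnotmem
    have hq : W.mkQ ((A 0).transpose t) ≠ 0 := by
      rw [Submodule.mkQ_apply, ne_eq, Submodule.Quotient.mk_eq_zero]
      exact hnotmem
    obtain ⟨ψ, hψ⟩ : ∃ ψ : Module.Dual ℝ ((Fin (J 0) → ℝ) ⧸ W),
        ψ (W.mkQ ((A 0).transpose t)) ≠ 0 := by
      by_contra hconall; push_neg at hconall
      exact hq ((Module.forall_dual_apply_eq_zero_iff ℝ _).mp hconall)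
    obtain ⟨φ, hφ⟩ : ∃ φ : (Fin (J 0) → ℝ) →ₗ[ℝ] ℝ, φ = ψ.comp W.mkQ := ⟨_, rfl⟩
    have hφt : φ ((A 0).transpose t) ≠ 0 := by rw [hφ]; exact hψ
    have hφ0 : ∀ r ∈ T.erase t, φ ((A 0).transpose r) = 0 := by
      intro r hr
      have hmem : (A 0).transpose r ∈ W := by
        rw [hW]; exact Submodule.subset_span ⟨r, hr, rfl⟩
      have hmk : W.mkQ ((A 0).transpose r) = 0 := by
        rw [Submodule.mkQ_apply, Submodule.Quotient.mk_eq_zero]; exact hmem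
      rw [hφ]
      show ψ (W.mkQ ((A 0).transpose r)) = 0
      rw [hmk, map_zero]
    obtain ⟨d, hd⟩ : ∃ d : Fin R → ℝ, d = fun r => c r * φ ((A 0).transpose r) := ⟨_, rfl⟩
    have hdr' : ∀ r, d r = c r * φ ((A 0).transpose r) := fun r => by rw [hd]
    have hdt : d t ≠ 0 := by rw [hdr']; exact mul_ne_zero hct hφt
    have hker' : ∀ j' : (∀ n : Fin N, Fin (J n.succ)),
        ∑ r, d r * iterKhatriRao (fun n => A n.succ) j' r = 0 := by
      intro j'
      have hv : (∑ r, (c r * iterKhatriRao (fun n => A n.succ) j' r) • (A 0).transpose r)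
          = (0 : Fin (J 0) → ℝ) := by
        funext i
        have h2 := hker (Fin.cons i j')
        simp only [iterKhatriRao, Fin.prod_univ_succ, Fin.cons_zero, Fin.cons_succ] at h2
        simp only [iterKhatriRao, Finset.sum_apply, Pi.smul_apply, Matrix.transpose_apply,
          smul_eq_mul, Pi.zero_apply]
        rw [← h2]
        exact Finset.sum_congr rfl fun r _ => by ring
      calc ∑ r, d r * iterKhatriRao (fun n => A n.succ) j' r
          = ∑ r, φ ((c r * iterKhatriRao (fun n => A n.succ) j' r) • (A 0).transpose r) := by
            apply Finset.sum_congr rfl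
            intro r _
            rw [map_smul, smul_eq_mul, hdr']
            ring
        _ = φ (∑ r, (c r * iterKhatriRao (fun n => A n.succ) j' r) • (A 0).transpose r) :=
            (map_sum φ _ _).symm
        _ = 0 := by rw [hv, map_zero]
    obtain ⟨S', hS'⟩ : ∃ S' : Finset (Fin R), S' = Finset.univ.filter (fun r => d r ≠ 0) :=
      ⟨_, rfl⟩
    have hS'sub : S' ⊆ S \ (T.erase t) := by
      intro r hr
      have hdrr : d r ≠ 0 := by rw [hS'] at hr; simpa using hr
      rw [hdr', mul_ne_zero_iff] at hdrr
      rw [Finset.mem_sdiff]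
      constructor
      · rw [hS]; simp [hdrr.1]
      · exact fun hmem => hdrr.2 (hφ0 r hmem)
    have hs'card : S'.card + min (kRank (A 0)) S.card ≤ S.card + 1 := by
      have h1 : S'.card ≤ (S \ T.erase t).card := Finset.card_le_card hS'sub
      have h2 : (S \ T.erase t).card = S.card - (T.erase t).card :=
        Finset.card_sdiff_of_subset ((Finset.erase_subset _ _).trans hTS)
      have h3 : (T.erase t).card = min (kRank (A 0)) S.card - 1 := by
        rw [Finset.card_erase_of_mem htT, hTcard]
      have h4 : 1 ≤ min (kRank (A 0)) S.card := le_min (hk1 0) hs1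
      omega
    have hdzero : d = 0 := by
      by_cases hS'0 : S'.card = 0
      · rw [Finset.card_eq_zero] at hS'0
        funext r
        show d r = 0
        by_contra hdrr
        have : r ∈ S' := by rw [hS']; simp [hdrr]
        rw [hS'0] at this
        exact absurd this (Finset.notMem_empty r)
      · have hcnd := ih R (fun n => J n.succ) (fun n => A n.succ) d hker' (fun n => hk1 n.succ)
        apply hcnd
        rw [← hS']
        have hcond2 : S.card + (N + 1) ≤
            (min (kRank (A 0)) S.card + ∑ n : Fin N, min (kRank (A n.succ)) S.card) + 1 := by
          rw [← Fin.sum_univ_succ (f := fun n => min (kRank (A n)) S.card)]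
          exact hcond
        have hsum1 : ∑ n : Fin N, min (kRank (A n.succ)) S.card
            ≤ ∑ n : Fin N, kRank (A n.succ) :=
          Finset.sum_le_sum fun n _ => min_le_left _ _
        have hk' : ∀ n ∈ (Finset.univ : Finset (Fin N)), 1 ≤ kRank (A n.succ) :=
          fun n _ => hk1 n.succ
        have hs'pos : 1 ≤ S'.card := Nat.one_le_iff_ne_zero.mpr hS'0
        have hmin := sum_min_ge (ι := Fin N) Finset.univ (fun n => kRank (A n.succ)) S'.card hk' hs'pos
        rw [Finset.card_univ, Fintype.card_fin] at hmin
        show S'.card + N ≤ (∑ n : Fin N, min (kRank (A n.succ)) S'.card) + 1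
        have hgen : ∀ x1 x2 x3 k0 : ℕ,
            S.card + (N + 1) ≤ (min k0 S.card + x1) + 1 →
            x1 ≤ x2 →
            S'.card + min k0 S.card ≤ S.card + 1 →
            min (x2 + 1) (S'.card + N) ≤ x3 + 1 →
            S'.card + N ≤ x3 + 1 := by
          intro x1 x2 x3 k0 h1 h2 h3 h4
          omega
        exact hgen _ _ _ _ hcond2 hsum1 hs'card hmin
    rw [hdzero] at hdt
    exact hdt rfl

/-- if `Σ_n k_{A^{(n)}} ≥ R + N − 1` with all `k_{A^{(n)}} ≥ 1`,
then the iterated Khatri-Rao product `A^{(1)} ⊙ ⋯ ⊙ A^{(N)}` has full column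
rank `R`. -/
theorem iterKhatriRao_full_rank {N R : ℕ} {J : Fin N → ℕ}
    (A : ∀ n, Matrix (Fin (J n)) (Fin R) ℝ)
    (hk : ∀ n, 1 ≤ kRank (A n))
    (h : R + N ≤ (∑ n, kRank (A n)) + 1) :
    (iterKhatriRao A).rank = R := by
  have hindep : LinearIndependent ℝ (fun r : Fin R => (iterKhatriRao A).transpose r) := by
    rw [Fintype.linearIndependent_iff]
    intro c hc r
    by_contra hr
    have hker : ∀ j, ∑ r', c r' * iterKhatriRao A j r' = 0 := by
      intro j
      have h1 := congrFun hc j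
      simpa [Finset.sum_apply, Matrix.transpose_apply] using h1
    have hs_le : (Finset.univ.filter fun r' => c r' ≠ 0).card ≤ R := by
      calc (Finset.univ.filter fun r' => c r' ≠ 0).card
          ≤ (Finset.univ : Finset (Fin R)).card := Finset.card_filter_le _ _
        _ = R := by rw [Finset.card_univ, Fintype.card_fin]
    have hs1 : 1 ≤ (Finset.univ.filter fun r' => c r' ≠ 0).card :=
      Finset.card_pos.mpr ⟨r, by simp [hr]⟩
    have hmin := sum_min_ge (ι := Fin N) Finset.univ (fun n => kRank (A n))
      ((Finset.univ.filter fun r' => c r' ≠ 0).card) (fun n _ => hk n) hs1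
    rw [Finset.card_univ, Fintype.card_fin] at hmin
    have hgen : ∀ x1 x2 s : ℕ, s ≤ R → R + N ≤ x1 + 1 →
        min (x1 + 1) (s + N) ≤ x2 + 1 → s + N ≤ x2 + 1 := by
      intro x1 x2 s h1 h2 h3
      omega
    have hcond := hgen _ _ _ hs_le h hmin
    have hzero := key_lemma N R J A c hker hk hcond
    rw [hzero] at hr
    exact hr rfl
  rw [Matrix.rank_eq_finrank_span_cols]
  exact (finrank_span_eq_card hindep).trans (Fintype.card_fin R)
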